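/- Let X be a Banach space, f : X → ℝ ∪ {+∞} proper lower semicontinuous convex, and x̄ ∈ X with f(x̄) = 0. If inf_{‖h‖=1} d⁺f(x̄, h) > 0, then S_f := {x : f(x) ≤ 0} = {x̄} and Er(f, x̄) ≥ inf_{‖h‖=1} d⁺f(x̄, h). -/
import Mathlib


open Filter Topology Metric Set

variable {X : Type*} [NormedAddCommGroup X] [NormedSpace ℝ X]

/-- difference quotient (f(x+th)-f(x))/t, with values in EReal -/
noncomputable def dquot (f : X → EReal) (x h : X) (t : ℝ) : EReal :=
  ((t⁻¹ : ℝ) : EReal) * (f (x + t • h) - f x)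

/-- directional derivative d⁺f(x,h) = inf_{t>0} (f(x+th)-f(x))/t -/
noncomputable def dirDeriv (f : X → EReal) (x h : X) : EReal :=
  ⨅ t : {t : ℝ // 0 < t}, dquot f x h t

/-- convexity for extended-real-valued functions -/
def EConvexOn (f : X → EReal) : Prop :=
  ∀ x y : X, ∀ a b : ℝ, 0 ≤ a → 0 ≤ b → a + b = 1 →
    f (a • x + b • y) ≤ (a : EReal) * f x + (b : EReal) * f y

/-- properness: somewhere finite and nowhere -∞ -/
def EProper (f : X → EReal) : Prop := (∃ x, f x ≠ ⊤) ∧ ∀ x, f x ≠ ⊥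

/-- inf of directional derivatives over the unit sphere -/
noncomputable def sphInf (f : X → EReal) (x : X) : EReal :=
  ⨅ h : {h : X // ‖h‖ = 1}, dirDeriv f x h

/-- global error bound modulus Er(f) -/
noncomputable def ErG (f : X → EReal) : EReal :=
  ⨅ x : {x : X // 0 < f x}, f x / ((Metric.infDist x.1 {y : X | f y ≤ 0} : ℝ) : EReal)

/-- local error bound modulus Er(f,x₀) -/
noncomputable def ErL (f : X → EReal) (x₀ : X) : EReal :=
  Filter.liminf (fun x => f x / ((Metric.infDist x {y : X | f y ≤ 0} : ℝ) : EReal))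
    (𝓝 x₀ ⊓ Filter.principal {x : X | 0 < f x})

set_option maxHeartbeats 1000000 in
lemma key_est {X : Type*} [NormedAddCommGroup X] [NormedSpace ℝ X]
    (f : X → EReal) (xb : X) (hxb : f xb = 0) (x : X) (hx : x ≠ xb) :
    sphInf f xb ≤ f x / ((‖x - xb‖ : ℝ) : EReal) := by
  set t : ℝ := ‖x - xb‖ with ht_def
  have ht : 0 < t := by
    simpa [ht_def] using sub_ne_zero.mpr hx
  set h : X := t⁻¹ • (x - xb) with hh_def
  have hh : ‖h‖ = 1 := by
    rw [hh_def, norm_smul, norm_inv, Real.norm_eq_abs, abs_of_pos ht]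
    exact inv_mul_cancel₀ ht.ne'
  have h1 : sphInf f xb ≤ dirDeriv f xb h := by
    rw [sphInf]; exact iInf_le _ (⟨h, hh⟩ : {h : X // ‖h‖ = 1})
  have h2 : dirDeriv f xb h ≤ dquot f xb h t := by
    rw [dirDeriv]; exact iInf_le _ (⟨t, ht⟩ : {t : ℝ // 0 < t})
  have hx' : xb + t • h = x := by
    rw [hh_def, smul_smul, mul_inv_cancel₀ ht.ne', one_smul, add_sub_cancel]
  have h3 : dquot f xb h t = f x / ((t : ℝ) : EReal) := by
    rw [dquot, hx', hxb, sub_zero, EReal.div_eq_inv_mul, ← EReal.coe_inv]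
  exact (h1.trans h2).trans_eq h3

/-- if inf_{‖h‖=1} d⁺f(xb,h) > 0 then S_f = {xb} and Er(f,xb) ≥ this inf. -/
theorem stmt3 [CompleteSpace X] (f : X → EReal) (hconv : EConvexOn f)
    (hproper : EProper f) (hlsc : LowerSemicontinuous f)
    (xb : X) (hxb : f xb = 0) (hpos : 0 < sphInf f xb) :
    {x : X | f x ≤ 0} = {xb} ∧ sphInf f xb ≤ ErL f xb := by
  have hset : {x : X | f x ≤ 0} = {xb} := by
    ext x
    simp only [Set.mem_setOf_eq, Set.mem_singleton_iff]
    constructor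
    · intro hfx
      by_contra hx
      have := key_est f xb hxb x hx
      have hle : f x / ((‖x - xb‖ : ℝ) : EReal) ≤ 0 :=
        EReal.div_nonpos_of_nonpos_of_nonneg hfx (by exact_mod_cast norm_nonneg _)
      exact absurd (this.trans hle) (not_le.mpr hpos)
    · rintro rfl; exact hxb.le
  refine ⟨hset, ?_⟩
  rw [ErL, hset]
  apply Filter.le_liminf_of_le (by isBoundedDefault)
  rw [Filter.eventually_inf_principal]
  filter_upwards with x hx
  have hxne : x ≠ xb := by
    rintro rfl
    exact absurd hxb (by simpa using hx.ne')
  rw [Metric.infDist_singleton, dist_eq_norm]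
  exact key_est f xb hxb x hxne
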